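/- Every differentiable solution k of the equation B·kₓ(x,t) + kₜ(x,t)·B = 0 on the square [-b,b]×[-b,b], where B = [[0,1],[-1,0]], has the form k(x,t) = c₁((x+t)/2) + c₂((x-t)/2), where c₁ is a matrix-valued function anti-commuting with B at every point and c₂ is a matrix-valued function commuting with B at every point. -/

import Mathlib

open Matrix Set

noncomputable section

attribute [local instance] Matrix.frobeniusNormedAddCommGroup Matrix.frobeniusNormedSpace

/-- The matrix B = [[0,1],[-1,0]]. -/
def Bmat : Matrix (Fin 2) (Fin 2) ℂ := !![0, 1; -1, 0]

attribute [local instance] Matrix.frobeniusNormedRing Matrix.frobeniusNormedAlgebra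

abbrev MatC := Matrix (Fin 2) (Fin 2) ℂ

/-- Rectangle estimate used both for Lipschitz continuity and the diagonal derivative. -/
lemma rect_bound (b e : ℝ) (he : e = 1 ∨ e = -1)
    (w wx wt : ℝ → ℝ → MatC)
    (hx : ∀ x ∈ Icc (-b) b, ∀ t ∈ Icc (-b) b, HasDerivAt (fun s => w s t) (wx x t) x)
    (ht : ∀ x ∈ Icc (-b) b, ∀ t ∈ Icc (-b) b, HasDerivAt (fun s => w x s) (wt x t) t)
    (x t r : ℝ)
    (hmx : ∀ σ ∈ Icc (0:ℝ) r, x + σ ∈ Icc (-b) b)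
    (hmt : ∀ σ ∈ Icc (0:ℝ) r, t - e * σ ∈ Icc (-b) b)
    (ρ' ρ : ℝ) (h0 : 0 ≤ ρ') (hρ : ρ' ≤ ρ) (hρr : ρ ≤ r)
    (wt₀ wx₀ : MatC) (C1 C2 : ℝ)
    (hC1 : ∀ τ ∈ Icc ρ' ρ, ‖wt (x + ρ) (t - e * τ) - wt₀‖ ≤ C1)
    (hC2 : ∀ s ∈ Icc ρ' ρ, ‖wx (x + s) (t - e * ρ') - wx₀‖ ≤ C2) :
    ‖w (x + ρ) (t - e * ρ) - w (x + ρ') (t - e * ρ')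
      + ((e * (ρ - ρ')) • wt₀ - (ρ - ρ') • wx₀)‖ ≤ (C1 + C2) * (ρ - ρ') := by
  have habs : |e| = 1 := by rcases he with h | h <;> simp [h]
  set Δ := ρ - ρ' with hΔ
  have hΔ0 : 0 ≤ Δ := by simp [hΔ]; linarith
  have hxρ : x + ρ ∈ Icc (-b) b := hmx ρ ⟨le_trans h0 hρ, hρr⟩
  -- vertical part
  set F : ℝ → MatC := fun τ => w (x + ρ) (t - e * (ρ' + τ)) + (e * τ) • wt₀ with hF
  have hFderiv : ∀ τ ∈ Icc (0:ℝ) Δ,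
      HasDerivWithinAt F ((-e) • (wt (x + ρ) (t - e * (ρ' + τ)) - wt₀)) (Icc 0 Δ) τ := by
    intro τ hτ
    have hmem : t - e * (ρ' + τ) ∈ Icc (-b) b := by
      refine hmt (ρ' + τ) ⟨by linarith [hτ.1], by linarith [hτ.2]⟩
    have hinner : HasDerivAt (fun τ : ℝ => t - e * (ρ' + τ)) (-e) τ := by
      simpa using ((hasDerivAt_id τ).const_add ρ').const_mul e |>.const_sub t
    have houter : HasDerivAt (fun s => w (x + ρ) s) (wt (x + ρ) (t - e * (ρ' + τ)))
        (t - e * (ρ' + τ)) := ht _ hxρ _ hmem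
    have h1 : HasDerivAt (fun τ : ℝ => w (x + ρ) (t - e * (ρ' + τ)))
        ((-e) • wt (x + ρ) (t - e * (ρ' + τ))) τ := houter.scomp τ hinner
    have h2 : HasDerivAt (fun τ : ℝ => (e * τ) • wt₀) (e • wt₀) τ := by
      have h := ((hasDerivAt_id τ).const_mul e).smul_const wt₀
      simp only [id, mul_one] at h
      exact h
    have := (h1.add h2).hasDerivWithinAt (s := Icc (0:ℝ) Δ)
    refine this.congr_deriv ?_
    rw [smul_sub, neg_smul e wt₀, sub_neg_eq_add]
  have hFbound : ∀ τ ∈ Ico (0:ℝ) Δ,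
      ‖(-e) • (wt (x + ρ) (t - e * (ρ' + τ)) - wt₀)‖ ≤ C1 := by
    intro τ hτ
    rw [norm_smul]
    have := hC1 (ρ' + τ) ⟨by linarith [hτ.1], by linarith [hτ.2.le]⟩
    simp only [norm_neg, Real.norm_eq_abs, abs_neg, habs]
    simpa [habs] using this
  have hFest := norm_image_sub_le_of_norm_deriv_le_segment' hFderiv hFbound Δ
    ⟨hΔ0, le_refl Δ⟩
  -- horizontal part
  set G : ℝ → MatC := fun s => w (x + (ρ' + s)) (t - e * ρ') - s • wx₀ with hG
  have htρ' : t - e * ρ' ∈ Icc (-b) b := hmt ρ' ⟨h0, le_trans hρ hρr⟩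
  have hGderiv : ∀ s ∈ Icc (0:ℝ) Δ,
      HasDerivWithinAt G (wx (x + (ρ' + s)) (t - e * ρ') - wx₀) (Icc 0 Δ) s := by
    intro s hs
    have hmem : x + (ρ' + s) ∈ Icc (-b) b :=
      hmx (ρ' + s) ⟨by linarith [hs.1], by linarith [hs.2]⟩
    have hinner : HasDerivAt (fun s : ℝ => x + (ρ' + s)) 1 s := by
      simpa using ((hasDerivAt_id s).const_add ρ').const_add x
    have houter : HasDerivAt (fun y => w y (t - e * ρ')) (wx (x + (ρ' + s)) (t - e * ρ'))
        (x + (ρ' + s)) := hx _ hmem _ htρ'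
    have h1 : HasDerivAt (fun s : ℝ => w (x + (ρ' + s)) (t - e * ρ'))
        ((1:ℝ) • wx (x + (ρ' + s)) (t - e * ρ')) s := by
      have h := houter.scomp s hinner
      exact h
    have h2 : HasDerivAt (fun s : ℝ => s • wx₀) wx₀ s := by
      have h := (hasDerivAt_id s).smul_const wx₀
      simp only [id, one_smul] at h
      exact h
    have := (h1.sub h2).hasDerivWithinAt (s := Icc (0:ℝ) Δ)
    rw [one_smul] at this
    exact this
  have hGbound : ∀ s ∈ Ico (0:ℝ) Δ, ‖wx (x + (ρ' + s)) (t - e * ρ') - wx₀‖ ≤ C2 := by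
    intro s hs
    exact hC2 (ρ' + s) ⟨by linarith [hs.1], by linarith [hs.2.le]⟩
  have hGest := norm_image_sub_le_of_norm_deriv_le_segment' hGderiv hGbound Δ
    ⟨hΔ0, le_refl Δ⟩
  -- combine
  have key : w (x + ρ) (t - e * ρ) - w (x + ρ') (t - e * ρ')
      + ((e * Δ) • wt₀ - Δ • wx₀) = (F Δ - F 0) + (G Δ - G 0) := by
    have e1 : ρ' + Δ = ρ := by simp [hΔ]
    simp only [hF, hG, e1]
    simp only [mul_zero, zero_smul, add_zero, sub_zero]
    abel
  rw [key]
  calc ‖(F Δ - F 0) + (G Δ - G 0)‖ ≤ ‖F Δ - F 0‖ + ‖G Δ - G 0‖ := norm_add_le _ _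
    _ ≤ C1 * (Δ - 0) + C2 * (Δ - 0) := add_le_add hFest hGest
    _ = (C1 + C2) * Δ := by ring

set_option maxHeartbeats 1000000 in
lemma diag_const (b e : ℝ) (he : e = 1 ∨ e = -1)
    (w wx wt : ℝ → ℝ → MatC)
    (hx : ∀ x ∈ Icc (-b) b, ∀ t ∈ Icc (-b) b, HasDerivAt (fun s => w s t) (wx x t) x)
    (ht : ∀ x ∈ Icc (-b) b, ∀ t ∈ Icc (-b) b, HasDerivAt (fun s => w x s) (wt x t) t)
    (hcx : ContinuousOn (fun p : ℝ × ℝ => wx p.1 p.2) (Icc (-b) b ×ˢ Icc (-b) b))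
    (hct : ContinuousOn (fun p : ℝ × ℝ => wt p.1 p.2) (Icc (-b) b ×ˢ Icc (-b) b))
    (hrel : ∀ x ∈ Icc (-b) b, ∀ t ∈ Icc (-b) b, wt x t = e • wx x t)
    (x t r : ℝ) (hr : 0 ≤ r)
    (hx0 : x ∈ Icc (-b) b) (ht0 : t ∈ Icc (-b) b)
    (hxr : x + r ∈ Icc (-b) b) (htr : t - e * r ∈ Icc (-b) b) :
    w (x + r) (t - e * r) = w x t := by
  have habs : |e| = 1 := by rcases he with h | h <;> simp [h]
  have hmx : ∀ σ ∈ Icc (0:ℝ) r, x + σ ∈ Icc (-b) b := by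
    intro σ hσ
    exact ⟨by linarith [hx0.1, hσ.1], by linarith [hxr.2, hσ.2]⟩
  have hmt : ∀ σ ∈ Icc (0:ℝ) r, t - e * σ ∈ Icc (-b) b := by
    intro σ hσ
    rcases he with h | h <;> subst h <;>
      exact ⟨by simp at htr ht0 ⊢; linarith [hσ.1, hσ.2], by simp at htr ht0 ⊢; linarith [hσ.1, hσ.2]⟩
  set S := Icc (-b) b ×ˢ Icc (-b) b with hS
  have hSc : IsCompact S := isCompact_Icc.prod isCompact_Icc
  set g : ℝ → MatC := fun ρ => w (x + ρ) (t - e * ρ) with hg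
  have hmemS : ∀ σ ∈ Icc (0:ℝ) r, ∀ τ ∈ Icc (0:ℝ) r, ((x + σ, t - e * τ) : ℝ × ℝ) ∈ S := by
    intro σ hσ τ hτ
    exact Set.mk_mem_prod (hmx σ hσ) (hmt τ hτ)
  -- continuity of g
  obtain ⟨M1, hM1⟩ := hSc.exists_bound_of_continuousOn hcx
  obtain ⟨M2, hM2⟩ := hSc.exists_bound_of_continuousOn hct
  set M := max M1 M2 with hM
  have hM0 : 0 ≤ M := le_trans (norm_nonneg _)
    (le_trans (hM1 (x, t) (Set.mk_mem_prod hx0 ht0)) (le_max_left _ _))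
  have claim : ∀ ρ' ∈ Icc (0:ℝ) r, ∀ ρ ∈ Icc (0:ℝ) r, ρ' ≤ ρ →
      ‖g ρ - g ρ'‖ ≤ (M + M) * (ρ - ρ') := by
    intro ρ' hρ' ρ hρm hle
    have hC1' : ∀ τ ∈ Icc ρ' ρ, ‖wt (x + ρ) (t - e * τ) - (0:MatC)‖ ≤ M := by
      intro τ hτ
      rw [sub_zero]
      have h := hM2 ((x + ρ, t - e * τ) : ℝ × ℝ)
        (hmemS ρ hρm τ ⟨le_trans hρ'.1 hτ.1, le_trans hτ.2 hρm.2⟩)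
      exact le_trans h (le_max_right M1 M2)
    have hC2' : ∀ s ∈ Icc ρ' ρ, ‖wx (x + s) (t - e * ρ') - (0:MatC)‖ ≤ M := by
      intro s hs
      rw [sub_zero]
      have h := hM1 ((x + s, t - e * ρ') : ℝ × ℝ)
        (hmemS s ⟨le_trans hρ'.1 hs.1, le_trans hs.2 hρm.2⟩ ρ' hρ')
      exact le_trans h (le_max_left M1 M2)
    have := rect_bound b e he w wx wt hx ht x t r hmx hmt ρ' ρ hρ'.1 hle hρm.2
      0 0 M M
      hC1' hC2'
    rw [smul_zero, smul_zero, sub_zero, add_zero] at this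
    exact this
  have hgcont : ContinuousOn g (Icc 0 r) := by
    have : LipschitzOnWith (Real.toNNReal (M + M)) g (Icc 0 r) := by
      rw [lipschitzOnWith_iff_dist_le_mul]
      intro a ha c hc
      rcases le_total a c with hac | hca
      · rw [dist_comm, dist_eq_norm]
        calc ‖g c - g a‖ ≤ (M + M) * (c - a) := claim a ha c hc hac
          _ ≤ Real.toNNReal (M + M) * dist a c := by
              rw [Real.coe_toNNReal _ (by linarith), Real.dist_eq, abs_sub_comm,
                abs_of_nonneg (by linarith)]
      · rw [dist_eq_norm]
        calc ‖g a - g c‖ ≤ (M + M) * (a - c) := claim c hc a ha hca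
          _ ≤ Real.toNNReal (M + M) * dist a c := by
              rw [Real.coe_toNNReal _ (by linarith), Real.dist_eq,
                abs_of_nonneg (by linarith)]
    exact this.continuousOn
  -- derivative of g
  have hderiv : ∀ ρ₀ ∈ Ico (0:ℝ) r, HasDerivWithinAt g 0 (Ici ρ₀) ρ₀ := by
    intro ρ₀ hρ₀
    have hsub : HasDerivWithinAt g 0 (Icc ρ₀ r) ρ₀ := by
      refine hasDerivWithinAt_iff_isLittleO.2 ?_
      rw [Asymptotics.isLittleO_iff]
      intro c hc
      have hp₀S : ((x + ρ₀, t - e * ρ₀) : ℝ × ℝ) ∈ S :=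
        hmemS ρ₀ ⟨hρ₀.1, hρ₀.2.le⟩ ρ₀ ⟨hρ₀.1, hρ₀.2.le⟩
      obtain ⟨δ1, hδ1, hδ1'⟩ := Metric.continuousWithinAt_iff.1 (hct _ hp₀S) (c/2) (by linarith)
      obtain ⟨δ2, hδ2, hδ2'⟩ := Metric.continuousWithinAt_iff.1 (hcx _ hp₀S) (c/2) (by linarith)
      have hδ : 0 < min δ1 δ2 := lt_min hδ1 hδ2
      filter_upwards [self_mem_nhdsWithin,
        mem_nhdsWithin_of_mem_nhds (Metric.ball_mem_nhds ρ₀ hδ)] with ρ hρmem hρball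
      have hρr' : ρ ≤ r := hρmem.2
      have hρ₀ρ : ρ₀ ≤ ρ := hρmem.1
      have hdist : |ρ - ρ₀| < min δ1 δ2 := by
        simpa [Real.dist_eq] using hρball
      set wt₀ := wt (x + ρ₀) (t - e * ρ₀) with hwt₀
      set wx₀ := wx (x + ρ₀) (t - e * ρ₀) with hwx₀
      have key := rect_bound b e he w wx wt hx ht x t r hmx hmt ρ₀ ρ hρ₀.1 hρ₀ρ hρr'
        wt₀ wx₀ (c/2) (c/2)
        (fun τ hτ => by
          have hτr : τ ∈ Icc (0:ℝ) r := ⟨le_trans hρ₀.1 hτ.1, le_trans hτ.2 hρr'⟩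
          have hqS : ((x + ρ, t - e * τ) : ℝ × ℝ) ∈ S := hmemS ρ ⟨le_trans hρ₀.1 hρ₀ρ, hρr'⟩ τ hτr
          have hd : dist ((x + ρ, t - e * τ) : ℝ × ℝ) (x + ρ₀, t - e * ρ₀) < δ1 := by
            rw [Prod.dist_eq]
            apply max_lt
            · rw [Real.dist_eq, show x + ρ - (x + ρ₀) = ρ - ρ₀ from by ring]
              exact lt_of_lt_of_le hdist (min_le_left _ _)
            · rw [Real.dist_eq, show t - e * τ - (t - e * ρ₀) = e * (ρ₀ - τ) from by ring,
                abs_mul, habs, one_mul, abs_sub_comm]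
              have h2 : |τ - ρ₀| ≤ |ρ - ρ₀| := by
                rw [abs_of_nonneg (by linarith [hτ.1]), abs_of_nonneg (by linarith)]
                linarith [hτ.2]
              exact lt_of_le_of_lt h2 (lt_of_lt_of_le hdist (min_le_left _ _))
          have := hδ1' (x := ((x + ρ, t - e * τ) : ℝ × ℝ)) hqS hd
          rw [dist_eq_norm] at this
          exact this.le)
        (fun s hs => by
          have hsr : s ∈ Icc (0:ℝ) r := ⟨le_trans hρ₀.1 hs.1, le_trans hs.2 hρr'⟩
          have hqS : ((x + s, t - e * ρ₀) : ℝ × ℝ) ∈ S := hmemS s hsr ρ₀ ⟨hρ₀.1, hρ₀.2.le⟩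
          have hd : dist ((x + s, t - e * ρ₀) : ℝ × ℝ) (x + ρ₀, t - e * ρ₀) < δ2 := by
            rw [Prod.dist_eq]
            apply max_lt
            · rw [Real.dist_eq, show x + s - (x + ρ₀) = s - ρ₀ from by ring]
              have h2 : |s - ρ₀| ≤ |ρ - ρ₀| := by
                rw [abs_of_nonneg (by linarith [hs.1]), abs_of_nonneg (by linarith)]
                linarith [hs.2]
              exact lt_of_le_of_lt h2 (lt_of_lt_of_le hdist (min_le_right _ _))
            · simpa using hδ2
          have := hδ2' (x := ((x + s, t - e * ρ₀) : ℝ × ℝ)) hqS hd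
          rw [dist_eq_norm] at this
          exact this.le)
      -- the correction term vanishes
      have hee : e * e = 1 := by rcases he with h | h <;> simp [h]
      have hzero : (e * (ρ - ρ₀)) • wt₀ - (ρ - ρ₀) • wx₀ = 0 := by
        have h := hrel (x + ρ₀) (hmx ρ₀ ⟨hρ₀.1, hρ₀.2.le⟩) (t - e * ρ₀)
          (hmt ρ₀ ⟨hρ₀.1, hρ₀.2.le⟩)
        rw [← hwt₀, ← hwx₀] at h
        rw [h, smul_smul]
        have : e * (ρ - ρ₀) * e = ρ - ρ₀ := by nlinarith [hee]
        rw [this, sub_self]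
      rw [hzero, add_zero] at key
      simp only [smul_zero, sub_zero]
      calc ‖g ρ - g ρ₀‖ ≤ (c/2 + c/2) * (ρ - ρ₀) := key
        _ = c * ‖ρ - ρ₀‖ := by
            rw [Real.norm_eq_abs, abs_of_nonneg (by linarith)]; ring
    exact hsub.mono_of_mem_nhdsWithin (Icc_mem_nhdsGE_of_mem ⟨le_refl _, hρ₀.2⟩)
  have := constant_of_has_deriv_right_zero hgcont hderiv r ⟨hr, le_refl r⟩
  simpa [hg] using this

lemma hBB : Bmat * Bmat = -1 := by
  ext i j; fin_cases i <;> fin_cases j <;> simp [Bmat]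

lemma conj_conj (A : MatC) : Bmat * (Bmat * A * Bmat) * Bmat = A := by
  calc Bmat * (Bmat * A * Bmat) * Bmat = (Bmat * Bmat) * A * (Bmat * Bmat) := by noncomm_ring
    _ = A := by rw [hBB]; simp

lemma anti_part (A : MatC) : (A + Bmat * A * Bmat) * Bmat = -(Bmat * (A + Bmat * A * Bmat)) := by
  have h1 : (A + Bmat * A * Bmat) * Bmat = A * Bmat + Bmat * A * (Bmat * Bmat) := by noncomm_ring
  have h2 : -(Bmat * (A + Bmat * A * Bmat)) = -(Bmat * A) - (Bmat * Bmat) * (A * Bmat) := by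
    noncomm_ring
  rw [h1, h2, hBB]; noncomm_ring

lemma comm_part (A : MatC) : (A - Bmat * A * Bmat) * Bmat = Bmat * (A - Bmat * A * Bmat) := by
  have h1 : (A - Bmat * A * Bmat) * Bmat = A * Bmat - Bmat * A * (Bmat * Bmat) := by noncomm_ring
  have h2 : Bmat * (A - Bmat * A * Bmat) = Bmat * A - (Bmat * Bmat) * (A * Bmat) := by
    noncomm_ring
  rw [h1, h2, hBB]; noncomm_ring

/-- Every continuously differentiable solution of B kₓ + kₜ B = 0 on the square
`[-b,b] × [-b,b]` is of the form `c₁((x+t)/2) + c₂((x-t)/2)` where `c₁` anti-commutes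
with `B` pointwise and `c₂` commutes with `B` pointwise. -/
theorem stmt_4 (b : ℝ) (hb : 0 < b)
    (k kx kt : ℝ → ℝ → Matrix (Fin 2) (Fin 2) ℂ)
    (hkx : ∀ x ∈ Icc (-b) b, ∀ t ∈ Icc (-b) b, HasDerivAt (fun s => k s t) (kx x t) x)
    (hkt : ∀ x ∈ Icc (-b) b, ∀ t ∈ Icc (-b) b, HasDerivAt (fun s => k x s) (kt x t) t)
    (hkxc : ContinuousOn (fun p : ℝ × ℝ => kx p.1 p.2) (Icc (-b) b ×ˢ Icc (-b) b))
    (hktc : ContinuousOn (fun p : ℝ × ℝ => kt p.1 p.2) (Icc (-b) b ×ˢ Icc (-b) b))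
    (hpde : ∀ x ∈ Icc (-b) b, ∀ t ∈ Icc (-b) b,
      Bmat * kx x t + kt x t * Bmat = 0) :
    ∃ c₁ c₂ : ℝ → Matrix (Fin 2) (Fin 2) ℂ,
      (∀ s, c₁ s * Bmat = -(Bmat * c₁ s)) ∧
      (∀ s, c₂ s * Bmat = Bmat * c₂ s) ∧
      (∀ x ∈ Icc (-b) b, ∀ t ∈ Icc (-b) b,
        k x t = c₁ ((x + t) / 2) + c₂ ((x - t) / 2)) := by
  classical
  -- `kt = B kx B` on the square
  have hk : ∀ x ∈ Icc (-b) b, ∀ t ∈ Icc (-b) b, kt x t = Bmat * kx x t * Bmat := by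
    intro x hx t ht
    have h := hpde x hx t ht
    have h1 : kt x t * Bmat = -(Bmat * kx x t) := eq_neg_of_add_eq_zero_right h
    have h2 : kt x t * Bmat * Bmat = -(Bmat * kx x t) * Bmat := by rw [h1]
    have h3 : kt x t * (Bmat * Bmat) = -(Bmat * kx x t * Bmat) := by
      rw [← mul_assoc]; rw [h2]; noncomm_ring
    rw [hBB] at h3
    have : -(kt x t) = -(Bmat * kx x t * Bmat) := by rw [← h3]; noncomm_ring
    exact neg_inj.1 this
  set u : ℝ → ℝ → MatC := fun x t => (2:ℂ)⁻¹ • (k x t + Bmat * k x t * Bmat) with hu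
  set v : ℝ → ℝ → MatC := fun x t => (2:ℂ)⁻¹ • (k x t - Bmat * k x t * Bmat) with hv
  set ux : ℝ → ℝ → MatC := fun x t => (2:ℂ)⁻¹ • (kx x t + Bmat * kx x t * Bmat) with hux
  set vx : ℝ → ℝ → MatC := fun x t => (2:ℂ)⁻¹ • (kx x t - Bmat * kx x t * Bmat) with hvx
  set ut : ℝ → ℝ → MatC := fun x t => (2:ℂ)⁻¹ • (kt x t + Bmat * kt x t * Bmat) with hut
  set vt : ℝ → ℝ → MatC := fun x t => (2:ℂ)⁻¹ • (kt x t - Bmat * kt x t * Bmat) with hvt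
  -- derivatives of u, v
  have hudx : ∀ x ∈ Icc (-b) b, ∀ t ∈ Icc (-b) b, HasDerivAt (fun s => u s t) (ux x t) x := by
    intro x hx t ht
    exact (((hkx x hx t ht).add (((hkx x hx t ht).const_mul Bmat).mul_const Bmat)).const_smul
      ((2:ℂ)⁻¹))
  have hvdx : ∀ x ∈ Icc (-b) b, ∀ t ∈ Icc (-b) b, HasDerivAt (fun s => v s t) (vx x t) x := by
    intro x hx t ht
    exact (((hkx x hx t ht).sub (((hkx x hx t ht).const_mul Bmat).mul_const Bmat)).const_smul
      ((2:ℂ)⁻¹))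
  have hudt : ∀ x ∈ Icc (-b) b, ∀ t ∈ Icc (-b) b, HasDerivAt (fun s => u x s) (ut x t) t := by
    intro x hx t ht
    exact (((hkt x hx t ht).add (((hkt x hx t ht).const_mul Bmat).mul_const Bmat)).const_smul
      ((2:ℂ)⁻¹))
  have hvdt : ∀ x ∈ Icc (-b) b, ∀ t ∈ Icc (-b) b, HasDerivAt (fun s => v x s) (vt x t) t := by
    intro x hx t ht
    exact (((hkt x hx t ht).sub (((hkt x hx t ht).const_mul Bmat).mul_const Bmat)).const_smul
      ((2:ℂ)⁻¹))
  -- continuity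
  have huxc : ContinuousOn (fun p : ℝ × ℝ => ux p.1 p.2) (Icc (-b) b ×ˢ Icc (-b) b) :=
    (hkxc.add ((continuousOn_const.mul hkxc).mul continuousOn_const)).const_smul ((2:ℂ)⁻¹)
  have hvxc : ContinuousOn (fun p : ℝ × ℝ => vx p.1 p.2) (Icc (-b) b ×ˢ Icc (-b) b) :=
    (hkxc.sub ((continuousOn_const.mul hkxc).mul continuousOn_const)).const_smul ((2:ℂ)⁻¹)
  have hutc : ContinuousOn (fun p : ℝ × ℝ => ut p.1 p.2) (Icc (-b) b ×ˢ Icc (-b) b) :=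
    (hktc.add ((continuousOn_const.mul hktc).mul continuousOn_const)).const_smul ((2:ℂ)⁻¹)
  have hvtc : ContinuousOn (fun p : ℝ × ℝ => vt p.1 p.2) (Icc (-b) b ×ˢ Icc (-b) b) :=
    (hktc.sub ((continuousOn_const.mul hktc).mul continuousOn_const)).const_smul ((2:ℂ)⁻¹)
  -- relations
  have hrelu : ∀ x ∈ Icc (-b) b, ∀ t ∈ Icc (-b) b, ut x t = (1:ℝ) • ux x t := by
    intro x hx t ht
    rw [one_smul, hut, hux]
    simp only
    rw [hk x hx t ht, conj_conj]
    rw [add_comm]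
  have hrelv : ∀ x ∈ Icc (-b) b, ∀ t ∈ Icc (-b) b, vt x t = (-1:ℝ) • vx x t := by
    intro x hx t ht
    rw [hvt, hvx]
    simp only
    rw [hk x hx t ht, conj_conj]
    rw [show ((-1:ℝ) • ((2:ℂ)⁻¹ • (kx x t - Bmat * kx x t * Bmat))) =
      -((2:ℂ)⁻¹ • (kx x t - Bmat * kx x t * Bmat)) from by rw [neg_one_smul]]
    rw [← smul_neg, neg_sub]
  -- decomposition k = u + v
  have hdecomp : ∀ x t, k x t = u x t + v x t := by
    intro x t
    rw [hu, hv]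
    simp only
    rw [← smul_add]
    have : (k x t + Bmat * k x t * Bmat) + (k x t - Bmat * k x t * Bmat) = (2:ℂ) • k x t := by
      rw [two_smul]; abel
    rw [this, smul_smul, inv_mul_cancel₀ (two_ne_zero), one_smul]
  refine ⟨fun s => if s ∈ Icc (-b) b then u s s else 0,
    fun s => if s ∈ Icc (-b) b then v s (-s) else 0, ?_, ?_, ?_⟩
  · intro s
    by_cases h : s ∈ Icc (-b) b
    · simp only [if_pos h]
      rw [hu]; simp only
      rw [smul_mul_assoc, mul_smul_comm, ← smul_neg, anti_part]
    · simp only [if_neg h]; simp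
  · intro s
    by_cases h : s ∈ Icc (-b) b
    · simp only [if_pos h]
      rw [hv]; simp only
      rw [smul_mul_assoc, mul_smul_comm, comm_part]
    · simp only [if_neg h]; simp
  · intro x hx t ht
    obtain ⟨hx1, hx2⟩ := hx
    obtain ⟨ht1, ht2⟩ := ht
    have hm : (x + t) / 2 ∈ Icc (-b) b := ⟨by linarith, by linarith⟩
    have hn : (x - t) / 2 ∈ Icc (-b) b := ⟨by linarith, by linarith⟩
    have hnn : -((x - t) / 2) ∈ Icc (-b) b := ⟨by linarith, by linarith⟩
    have hu_eq : u x t = u ((x + t) / 2) ((x + t) / 2) := by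
      rcases le_total x t with hxt | htx
      · have h := diag_const b 1 (Or.inl rfl) u ux ut hudx hudt huxc hutc hrelu
          x t ((t - x) / 2) (by linarith) ⟨hx1, hx2⟩ ⟨ht1, ht2⟩
          (by rw [show x + (t - x) / 2 = (x + t) / 2 from by ring]; exact hm)
          (by rw [show t - 1 * ((t - x) / 2) = (x + t) / 2 from by ring]; exact hm)
        rw [show x + (t - x) / 2 = (x + t) / 2 from by ring,
          show t - 1 * ((t - x) / 2) = (x + t) / 2 from by ring] at h
        exact h.symm
      · have h := diag_const b 1 (Or.inl rfl) u ux ut hudx hudt huxc hutc hrelu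
          ((x + t) / 2) ((x + t) / 2) ((x - t) / 2) (by linarith) hm hm
          (by rw [show (x + t) / 2 + (x - t) / 2 = x from by ring]; exact ⟨hx1, hx2⟩)
          (by rw [show (x + t) / 2 - 1 * ((x - t) / 2) = t from by ring]; exact ⟨ht1, ht2⟩)
        rw [show (x + t) / 2 + (x - t) / 2 = x from by ring,
          show (x + t) / 2 - 1 * ((x - t) / 2) = t from by ring] at h
        exact h
    have hv_eq : v x t = v ((x - t) / 2) (-((x - t) / 2)) := by
      rcases le_total (x + t) 0 with hxt | htx
      · have h := diag_const b (-1) (Or.inr rfl) v vx vt hvdx hvdt hvxc hvtc hrelv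
          x t (-(x + t) / 2) (by linarith) ⟨hx1, hx2⟩ ⟨ht1, ht2⟩
          (by rw [show x + -(x + t) / 2 = (x - t) / 2 from by ring]; exact hn)
          (by rw [show t - (-1) * (-(x + t) / 2) = -((x - t) / 2) from by ring]; exact hnn)
        rw [show x + -(x + t) / 2 = (x - t) / 2 from by ring,
          show t - (-1) * (-(x + t) / 2) = -((x - t) / 2) from by ring] at h
        exact h.symm
      · have h := diag_const b (-1) (Or.inr rfl) v vx vt hvdx hvdt hvxc hvtc hrelv
          ((x - t) / 2) (-((x - t) / 2)) ((x + t) / 2) (by linarith) hn hnn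
          (by rw [show (x - t) / 2 + (x + t) / 2 = x from by ring]; exact ⟨hx1, hx2⟩)
          (by rw [show -((x - t) / 2) - (-1) * ((x + t) / 2) = t from by ring]; exact ⟨ht1, ht2⟩)
        rw [show (x - t) / 2 + (x + t) / 2 = x from by ring,
          show -((x - t) / 2) - (-1) * ((x + t) / 2) = t from by ring] at h
        exact h
    rw [hdecomp x t, hu_eq, hv_eq]
    exact congrArg₂ HAdd.hAdd (if_pos hm).symm (if_pos hn).symm
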